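/- Let G be a finitely generated infinite monotilable amenable group. Then for any finite set C ⊆ G, any free measure-preserving G-action Q on a probability space Y, any ε > 0, and any tile F ⊆ G, there exist a finite set G₀ ⊆ G and a measurable set E ⊆ Y such that: (1) G₀ = ⊔_i F c_i for a finite collection {c_i} ⊆ G; (2) #(g G₀ △ G₀) < ε · #G₀ for all g ∈ C; (3) 3(#F)^2 / #G₀ < ε; (4) the sets {Q^g E}_{g ∈ G₀} are pairwise disjoint with total measure at least 1 − ε. -/

import Mathlib

open MeasureTheory Filter Topology
open scoped symmDiff Pointwise

/-- `F` is a tile of the (countable) group `G`: `G` is a disjoint union of right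
translates `F cᵢ`. -/
def IsTile {G : Type*} [Group G] [DecidableEq G] (F : Finset G) : Prop :=
  ∃ c : ℕ → G, ∀ x : G, ∃! i : ℕ, x ∈ F.image (· * c i)

/-- `Q : G → Y → Y` is a measure-preserving action. -/
def IsMPAction {Y : Type*} [MeasurableSpace Y] {G : Type*} [Group G]
    (ν : Measure Y) (Q : G → Y → Y) : Prop :=
  (∀ g : G, MeasurePreserving (Q g) ν ν) ∧
    (∀ g h : G, ∀ y : Y, Q (g * h) y = Q g (Q h y)) ∧ (∀ y : Y, Q 1 y = y)

lemma mem_image_mul' {G : Type*} [Group G] [DecidableEq G] {s : Finset G} {h x : G} :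
    x ∈ s.image (h * ·) ↔ h⁻¹ * x ∈ s := by
  constructor
  · rintro hx
    obtain ⟨y, hy, rfl⟩ := Finset.mem_image.mp hx
    simpa using hy
  · intro hx
    exact Finset.mem_image.mpr ⟨h⁻¹ * x, hx, by group⟩

lemma card_image_mul' {G : Type*} [Group G] [DecidableEq G] (s : Finset G) (h : G) :
    (s.image (h * ·)).card = s.card :=
  Finset.card_image_of_injective _ (mul_right_injective h)

lemma folner_ev {G : Type*} [Group G] [DecidableEq G] (Fseq : ℕ → Finset G)
    (hFolner : ∀ g : G, Tendsto
      (fun i => ((((Fseq i).image (g * ·) ∩ Fseq i).card : ℝ) / (Fseq i).card))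
      atTop (𝓝 1))
    (h : G) {δ : ℝ} (hδ : 0 < δ) (hδ1 : δ < 1) :
    ∀ᶠ i in atTop, 0 < (Fseq i).card ∧
      (1 - δ) * ((Fseq i).card : ℝ) ≤ (((Fseq i).image (h * ·) ∩ Fseq i).card : ℝ) := by
  filter_upwards [(hFolner h).eventually (eventually_gt_nhds (show 1 - δ < 1 by linarith))]
    with i hi
  have hpos : 0 < (Fseq i).card := by
    by_contra h0
    have : (Fseq i).card = 0 := by omega
    rw [this] at hi
    norm_num at hi
    linarith
  have hposR : (0:ℝ) < (Fseq i).card := by exact_mod_cast hpos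
  rw [lt_div_iff₀ hposR] at hi
  exact ⟨hpos, le_of_lt hi⟩

lemma sdiff_card_bound {G : Type*} [Group G] [DecidableEq G] {s : Finset G} {h : G} {δ : ℝ}
    (hb : (1 - δ) * (s.card : ℝ) ≤ ((s.image (h * ·) ∩ s).card : ℝ)) :
    ((s \ s.image (h * ·)).card : ℝ) ≤ δ * s.card ∧
    ((s.image (h * ·) \ s).card : ℝ) ≤ δ * s.card := by
  set t := s.image (h * ·) with ht
  have h1 : (s ∩ t).card + (s \ t).card = s.card := Finset.card_inter_add_card_sdiff s t
  have h2 : (t ∩ s).card + (t \ s).card = t.card := Finset.card_inter_add_card_sdiff t s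
  have h3 : t.card = s.card := card_image_mul' s h
  have h4 : (s ∩ t).card = (t ∩ s).card := by rw [Finset.inter_comm]
  constructor
  · have : ((s \ t).card : ℝ) = (s.card : ℝ) - ((t ∩ s).card : ℝ) := by
      rw [← h4]; push_cast [← h1]; ring
    rw [this]; linarith
  · have : ((t \ s).card : ℝ) = (s.card : ℝ) - ((t ∩ s).card : ℝ) := by
      rw [← h3]; push_cast [← h2]; ring
    rw [this]; linarith

lemma card_ev {G : Type*} [Group G] [DecidableEq G] [Infinite G] (Fseq : ℕ → Finset G)
    (hFolner : ∀ g : G, Tendsto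
      (fun i => ((((Fseq i).image (g * ·) ∩ Fseq i).card : ℝ) / (Fseq i).card))
      atTop (𝓝 1))
    (m : ℕ) : ∀ᶠ i in atTop, m ≤ (Fseq i).card := by
  obtain ⟨S, hS⟩ := Infinite.exists_subset_card_eq G m
  set η : ℝ := 1 / (m + 2) with hη
  have hηpos : 0 < η := by positivity
  have hη1 : η < 1 := by
    rw [hη, div_lt_one (by positivity)]
    have : (0:ℝ) ≤ (m:ℝ) := Nat.cast_nonneg m
    linarith
  have hev : ∀ᶠ i in atTop, ∀ g ∈ S, 0 < (Fseq i).card ∧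
      (1 - η) * ((Fseq i).card : ℝ) ≤ (((Fseq i).image (g⁻¹ * ·) ∩ Fseq i).card : ℝ) :=
    (eventually_all_finset S).mpr fun g _ => folner_ev Fseq hFolner g⁻¹ hηpos hη1
  rcases Nat.eq_zero_or_pos m with hm | hm
  · filter_upwards with i; omega
  filter_upwards [hev] with i hi
  have hpos : 0 < (Fseq i).card := by
    obtain ⟨g, hg⟩ := Finset.card_pos.mp (hS ▸ hm)
    exact (hi g hg).1
  set s := Fseq i with hs
  set T := s.filter (fun x => ∀ g ∈ S, g * x ∈ s) with hT
  have hsub : s \ T ⊆ S.biUnion (fun g => s \ s.image (g⁻¹ * ·)) := by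
    intro x hx
    rw [Finset.mem_sdiff, hT, Finset.mem_filter] at hx
    have hxs := hx.1
    have : ¬ ∀ g ∈ S, g * x ∈ s := fun hh => hx.2 ⟨hxs, hh⟩
    push_neg at this
    obtain ⟨g, hg, hgx⟩ := this
    refine Finset.mem_biUnion.mpr ⟨g, hg, Finset.mem_sdiff.mpr ⟨hxs, ?_⟩⟩
    rw [mem_image_mul']
    simpa using hgx
  have hcardbd : ((s \ T).card : ℝ) ≤ m * (η * s.card) := by
    calc ((s \ T).card : ℝ) ≤ ((S.biUnion (fun g => s \ s.image (g⁻¹ * ·))).card : ℝ) := by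
          exact_mod_cast Finset.card_le_card hsub
      _ ≤ ∑ g ∈ S, ((s \ s.image (g⁻¹ * ·)).card : ℝ) := by
          exact_mod_cast Finset.card_biUnion_le
      _ ≤ ∑ _g ∈ S, (η * s.card) := by
          refine Finset.sum_le_sum fun g hg => ?_
          exact (sdiff_card_bound (hi g hg).2).1
      _ = m * (η * s.card) := by rw [Finset.sum_const, hS]; push_cast; ring
  have hposR : (0:ℝ) < s.card := by exact_mod_cast hpos
  have hlt : ((s \ T).card : ℝ) < s.card := by
    have : (m : ℝ) * η < 1 := by
      rw [hη]
      rw [mul_one_div, div_lt_one (by positivity)]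
      norm_num
    nlinarith
  have hTne : T.Nonempty := by
    rw [← Finset.card_pos]
    by_contra h0
    have hT0 : T.card = 0 := by omega
    have hTs : T ⊆ s := Finset.filter_subset _ _
    have hc : (s \ T).card + T.card = s.card := Finset.card_sdiff_add_card_eq_card hTs
    rw [hT0, add_zero] at hc
    rw [hc] at hlt
    exact lt_irrefl _ hlt
  obtain ⟨x, hxT⟩ := hTne
  rw [hT, Finset.mem_filter] at hxT
  have hinj : Set.InjOn (· * x) S := fun a _ b _ hab => by
    simpa using mul_right_cancel hab
  have : (S.image (· * x)).card = m := by rw [Finset.card_image_of_injOn hinj, hS]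
  rw [← this]
  apply Finset.card_le_card
  intro y hy
  obtain ⟨g, hg, rfl⟩ := Finset.mem_image.mp hy
  exact hxT.2 g hg


set_option maxHeartbeats 1000000 in
/-- **Lemma (large invariant-like tiles with towers).**  Let `G` be a finitely generated
infinite monotilable amenable group (with a Følner sequence of tiles, and assuming the
Rokhlin lemma for the free action `Q`).  For any finite set `C ⊆ G`, any free
measure-preserving `G`-action `Q` on a probability space `Y`, any `ε > 0` and any tile
`F`, there exist a finite set `G₀ ⊆ G` and a measurable `E ⊆ Y` such that:
1. `G₀ = ⊔ᵢ F cᵢ` for a finite collection `{cᵢ}`;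
2. `#(g G₀ △ G₀) < ε #G₀` for all `g ∈ C`;
3. `3 (#F)² / #G₀ < ε`;
4. `{Q^g E}_{g ∈ G₀}` are pairwise disjoint with total measure at least `1 − ε`. -/
theorem tile_tower_lemma {G : Type*} [Group G] [Countable G] [Infinite G] [DecidableEq G]
    {Y : Type*} [MeasurableSpace Y] (ν : Measure Y) [IsProbabilityMeasure ν]
    -- finitely generated
    (hfg : ∃ Sgen : Finset G, Subgroup.closure (Sgen : Set G) = ⊤)
    -- monotilable amenable: a Følner sequence of tiles
    (Fseq : ℕ → Finset G) (hFseqTile : ∀ i, IsTile (Fseq i))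
    (hFolner : ∀ g : G, Tendsto
      (fun i => ((((Fseq i).image (g * ·) ∩ Fseq i).card : ℝ) / (Fseq i).card))
      atTop (𝓝 1))
    -- a free measure-preserving action `Q`
    (Q : G → Y → Y) (hQ : IsMPAction ν Q)
    (hfree : ν {y : Y | ∃ g : G, g ≠ 1 ∧ Q g y = y} = 0)
    -- Rokhlin lemma for `Q`
    (hRokhlin : ∀ δ : ℝ, 0 < δ → ∀ F' : Finset G, IsTile F' →
      ∃ E : Set Y, MeasurableSet E ∧
        (∀ g ∈ F', ∀ h ∈ F', g ≠ h → Disjoint (Q g '' E) (Q h '' E)) ∧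
        1 - δ ≤ (ν (⋃ g ∈ F', Q g '' E)).toReal)
    (C : Finset G) (ε : ℝ) (hε : 0 < ε) (F : Finset G) (hF : IsTile F) :
    ∃ G₀ : Finset G, ∃ E : Set Y,
      -- (1) `G₀` is a finite disjoint union of right translates of `F`
      (∃ n : ℕ, ∃ c : Fin n → G,
        (∀ i j : Fin n, i ≠ j → Disjoint (F.image (· * c i)) (F.image (· * c j))) ∧
        G₀ = Finset.univ.biUnion fun i : Fin n => F.image (· * c i)) ∧
      -- (2) almost invariance under `C`
      (∀ g ∈ C, (((G₀.image (g * ·)) ∆ G₀).card : ℝ) < ε * G₀.card) ∧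
      -- (3) `G₀` is much larger than `F`
      (3 * (F.card : ℝ) ^ 2 / G₀.card < ε) ∧
      -- (4) a Rokhlin tower over `G₀` of measure at least `1 − ε`
      (MeasurableSet E ∧
        (∀ g ∈ G₀, ∀ h ∈ G₀, g ≠ h → Disjoint (Q g '' E) (Q h '' E)) ∧
        1 - ε ≤ (ν (⋃ g ∈ G₀, Q g '' E)).toReal) := by
  classical
  obtain ⟨c, hc⟩ := hF
  have hFne : F.Nonempty := by
    obtain ⟨i, hi, -⟩ := hc 1
    obtain ⟨f, hf, -⟩ := Finset.mem_image.mp hi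
    exact ⟨f, hf⟩
  set K : ℕ := F.card with hKdef
  have hK1 : 1 ≤ K := Finset.card_pos.mpr hFne
  have hKR : (1:ℝ) ≤ (K:ℝ) := by exact_mod_cast hK1
  have hKpos : (0:ℝ) < (K:ℝ)^2 + 1 := by positivity
  set δ : ℝ := min (ε / (8 * ((K:ℝ)^2 + 1))) (1 / (2 * ((K:ℝ)^2 + 1))) with hδdef
  have hδpos : 0 < δ := lt_min (by positivity) (by positivity)
  have hδa : ((K:ℝ)^2 + 1) * δ ≤ ε / 8 := by
    have h := min_le_left (ε / (8 * ((K:ℝ)^2 + 1))) (1 / (2 * ((K:ℝ)^2 + 1)))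
    calc ((K:ℝ)^2 + 1) * δ ≤ ((K:ℝ)^2 + 1) * (ε / (8 * ((K:ℝ)^2 + 1))) :=
          mul_le_mul_of_nonneg_left (hδdef ▸ h) (le_of_lt hKpos)
      _ = ε / 8 := by field_simp
  have hδb : ((K:ℝ)^2 + 1) * δ ≤ 1 / 2 := by
    have h := min_le_right (ε / (8 * ((K:ℝ)^2 + 1))) (1 / (2 * ((K:ℝ)^2 + 1)))
    calc ((K:ℝ)^2 + 1) * δ ≤ ((K:ℝ)^2 + 1) * (1 / (2 * ((K:ℝ)^2 + 1))) :=
          mul_le_mul_of_nonneg_left (hδdef ▸ h) (le_of_lt hKpos)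
      _ = 1 / 2 := by field_simp
  have hKδ : (K:ℝ)^2 * δ ≤ 1 / 2 := by nlinarith
  have hδ1 : δ < 1 := by nlinarith
  -- the sets of group elements we need Følner control on
  set D' : Finset G := Finset.image₂ (fun a b => a * b⁻¹) F F with hD'def
  set D : Finset G := C ∪ D' with hDdef
  -- choose a good index i
  have hev1 : ∀ᶠ i in atTop, ∀ h ∈ D, 0 < (Fseq i).card ∧
      (1 - δ) * ((Fseq i).card : ℝ) ≤ (((Fseq i).image (h * ·) ∩ Fseq i).card : ℝ) :=
    (eventually_all_finset D).mpr fun h _ => folner_ev Fseq hFolner h hδpos hδ1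
  have hev2 := card_ev Fseq hFolner (⌈6 * (K:ℝ)^2 / ε⌉₊ + 1)
  obtain ⟨i, hi1, hi2⟩ := (hev1.and hev2).exists
  set F' : Finset G := Fseq i with hF'def
  have hF'big : 6 * (K:ℝ)^2 / ε < (F'.card : ℝ) := by
    have h1 : 6 * (K:ℝ)^2 / ε ≤ (⌈6 * (K:ℝ)^2 / ε⌉₊ : ℝ) := Nat.le_ceil _
    have h2 : (⌈6 * (K:ℝ)^2 / ε⌉₊ : ℝ) < (F'.card : ℝ) := by exact_mod_cast hi2
    linarith
  have hF'posR : (0:ℝ) < (F'.card : ℝ) := by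
    have : (0:ℝ) ≤ 6 * (K:ℝ)^2 / ε := by positivity
    linarith
  -- tiling index function
  set idx : G → ℕ := fun x => (hc x).choose with hidxdef
  have hidx1 : ∀ x : G, x ∈ F.image (· * c (idx x)) := fun x => (hc x).choose_spec.1
  have hidx2 : ∀ (x : G) (j : ℕ), x ∈ F.image (· * c j) → j = idx x :=
    fun x j h => (hc x).choose_spec.2 j h
  have hdisjT : ∀ j j' : ℕ, j ≠ j' → Disjoint (F.image (· * c j)) (F.image (· * c j')) := by
    intro j j' hne
    rw [Finset.disjoint_left]
    intro x hx hx'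
    exact hne ((hidx2 x j hx).trans (hidx2 x j' hx').symm)
  set J : Finset ℕ := (F'.image idx).filter (fun j => F.image (· * c j) ⊆ F') with hJdef
  set G₀ : Finset G := J.biUnion (fun j => F.image (· * c j)) with hG₀def
  have hG₀sub : G₀ ⊆ F' := by
    intro x hx
    obtain ⟨j, hj, hxj⟩ := Finset.mem_biUnion.mp hx
    exact (Finset.mem_filter.mp hj).2 hxj
  -- covering bound : F' \ G₀ is inside the union of boundaries
  have hcover : F' \ G₀ ⊆ D'.biUnion (fun h => F' \ F'.image (h * ·)) := by
    intro x hx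
    obtain ⟨hxF', hxG₀⟩ := Finset.mem_sdiff.mp hx
    have hxj : x ∈ F.image (· * c (idx x)) := hidx1 x
    obtain ⟨j, hjeq⟩ : ∃ j, idx x = j := ⟨_, rfl⟩
    rw [hjeq] at hxj
    have hjnot : ¬ F.image (· * c j) ⊆ F' := by
      intro hsubj
      exact hxG₀ (Finset.mem_biUnion.mpr ⟨j,
        Finset.mem_filter.mpr ⟨Finset.mem_image.mpr ⟨x, hxF', hjeq⟩, hsubj⟩, hxj⟩)
    have : ∃ y ∈ F.image (· * c j), y ∉ F' := by
      by_contra h; push_neg at h; exact hjnot h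
    obtain ⟨y, hy, hynot⟩ := this
    obtain ⟨f, hf, rfl⟩ := Finset.mem_image.mp hy
    obtain ⟨f', hf', hf'x⟩ := Finset.mem_image.mp hxj
    refine Finset.mem_biUnion.mpr ⟨f' * f⁻¹, Finset.mem_image₂.mpr ⟨f', hf', f, hf, rfl⟩, ?_⟩
    rw [Finset.mem_sdiff]
    refine ⟨hxF', ?_⟩
    rw [mem_image_mul']
    have hxeq : (f' * f⁻¹)⁻¹ * x = f * c j := by rw [← hf'x]; group
    rw [hxeq]
    exact hynot
  have hD'sub : D' ⊆ D := Finset.subset_union_right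
  have hsdiffbd : ((F' \ G₀).card : ℝ) ≤ (K:ℝ)^2 * δ * F'.card := by
    have hD'card : (D'.card : ℝ) ≤ (K:ℝ) * K := by
      exact_mod_cast Finset.card_image₂_le _ F F
    calc ((F' \ G₀).card : ℝ)
        ≤ ((D'.biUnion (fun h => F' \ F'.image (h * ·))).card : ℝ) := by
          exact_mod_cast Finset.card_le_card hcover
      _ ≤ ∑ h ∈ D', ((F' \ F'.image (h * ·)).card : ℝ) := by
          exact_mod_cast Finset.card_biUnion_le
      _ ≤ ∑ _h ∈ D', δ * F'.card := by
          refine Finset.sum_le_sum fun h hh => ?_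
          exact (sdiff_card_bound (hi1 h (hD'sub hh)).2).1
      _ = (D'.card : ℝ) * (δ * F'.card) := by rw [Finset.sum_const]; push_cast; ring
      _ ≤ ((K:ℝ) * K) * (δ * F'.card) :=
          mul_le_mul_of_nonneg_right hD'card
            (mul_nonneg (le_of_lt hδpos) (Nat.cast_nonneg _))
      _ = (K:ℝ)^2 * δ * F'.card := by ring
  have hG₀big : (1 - (K:ℝ)^2 * δ) * F'.card ≤ (G₀.card : ℝ) := by
    have hc' : (F' \ G₀).card + G₀.card = F'.card := Finset.card_sdiff_add_card_eq_card hG₀sub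
    have : ((F' \ G₀).card : ℝ) + (G₀.card : ℝ) = (F'.card : ℝ) := by exact_mod_cast hc'
    nlinarith
  have hF'le2 : (F'.card : ℝ) ≤ 2 * G₀.card := by nlinarith
  have hG₀pos : (0:ℝ) < (G₀.card : ℝ) := by nlinarith
  -- the Rokhlin tower
  obtain ⟨E, hEmeas, hEdisj, hEbig⟩ := hRokhlin δ hδpos F' (hFseqTile i)
  have hQimg : ∀ (g : G) (s : Set Y), Q g '' s = Q g⁻¹ ⁻¹' s := by
    intro g s
    ext y
    constructor
    · rintro ⟨x, hx, rfl⟩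
      show Q g⁻¹ (Q g x) ∈ s
      rw [← hQ.2.1, inv_mul_cancel, hQ.2.2]
      exact hx
    · intro hy
      exact ⟨Q g⁻¹ y, hy, by rw [← hQ.2.1, mul_inv_cancel, hQ.2.2]⟩
  have hmeasQ : ∀ g : G, MeasurableSet (Q g '' E) := fun g => by
    rw [hQimg]; exact (hQ.1 g⁻¹).measurable hEmeas
  have hνQ : ∀ g : G, ν (Q g '' E) = ν E := fun g => by
    rw [hQimg]; exact (hQ.1 g⁻¹).measure_preimage hEmeas.nullMeasurableSet
  have hsum : ∀ s : Finset G, s ⊆ F' →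
      (ν (⋃ g ∈ s, Q g '' E)).toReal = (s.card : ℝ) * (ν E).toReal := by
    intro s hs
    rw [measure_biUnion_finset (fun a ha b hb hab => hEdisj a (hs ha) b (hs hb) hab)
      (fun g _ => hmeasQ g)]
    rw [Finset.sum_congr rfl (fun g _ => hνQ g), Finset.sum_const, nsmul_eq_mul,
      ENNReal.toReal_mul]
    simp
  set t : ℝ := (ν E).toReal with htdef
  have ht0 : 0 ≤ t := ENNReal.toReal_nonneg
  have hFt : 1 - δ ≤ (F'.card : ℝ) * t := by
    rw [hsum F' (le_refl _)] at hEbig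
    exact hEbig
  refine ⟨G₀, E, ?_, ?_, ?_, hEmeas, ?_, ?_⟩
  · -- (1) disjoint union of translates
    refine ⟨J.toList.length, fun i' => c (J.toList.get i'), ?_, ?_⟩
    · intro i' j' hne
      apply hdisjT
      intro heq
      exact hne (List.nodup_iff_injective_get.mp J.nodup_toList heq)
    · ext x
      simp only [Finset.mem_biUnion, Finset.mem_univ, true_and, hG₀def]
      constructor
      · rintro ⟨j, hj, hxj⟩
        obtain ⟨i', hi'⟩ := List.mem_iff_get.mp (Finset.mem_toList.mpr hj)
        exact ⟨i', by rw [hi']; exact hxj⟩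
      · rintro ⟨i', hxi'⟩
        exact ⟨J.toList.get i', Finset.mem_toList.mp (J.toList.get_mem _), hxi'⟩
  · -- (2) almost invariance
    intro g hg
    have hgD : g ∈ D := Finset.mem_union_left _ hg
    obtain ⟨-, hgb⟩ := hi1 g hgD
    obtain ⟨hb1, hb2⟩ := sdiff_card_bound hgb
    set A : Finset G := G₀.image (g * ·) with hAdef
    set tF : Finset G := F'.image (g * ·) with htFdef
    have hsub1 : A \ G₀ ⊆ (tF \ F') ∪ (F' \ G₀) := by
      intro x hx
      obtain ⟨hxA, hxG⟩ := Finset.mem_sdiff.mp hx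
      have hxt : x ∈ tF := Finset.image_subset_image hG₀sub hxA
      by_cases hxF : x ∈ F'
      · exact Finset.mem_union_right _ (Finset.mem_sdiff.mpr ⟨hxF, hxG⟩)
      · exact Finset.mem_union_left _ (Finset.mem_sdiff.mpr ⟨hxt, hxF⟩)
    have hsub2 : G₀ \ A ⊆ (F' \ tF) ∪ (tF \ A) := by
      intro x hx
      obtain ⟨hxG, hxA⟩ := Finset.mem_sdiff.mp hx
      have hxF : x ∈ F' := hG₀sub hxG
      by_cases hxt : x ∈ tF
      · exact Finset.mem_union_right _ (Finset.mem_sdiff.mpr ⟨hxt, hxA⟩)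
      · exact Finset.mem_union_left _ (Finset.mem_sdiff.mpr ⟨hxF, hxt⟩)
    have htA : (tF \ A).card = (F' \ G₀).card := by
      rw [htFdef, hAdef, ← Finset.image_sdiff _ _ (mul_right_injective g)]
      exact Finset.card_image_of_injective _ (mul_right_injective g)
    have hcard1 : ((A \ G₀).card : ℝ) ≤ ((tF \ F').card : ℝ) + ((F' \ G₀).card : ℝ) := by
      calc ((A \ G₀).card : ℝ) ≤ (((tF \ F') ∪ (F' \ G₀)).card : ℝ) := by
            exact_mod_cast Finset.card_le_card hsub1
        _ ≤ ((tF \ F').card : ℝ) + ((F' \ G₀).card : ℝ) := by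
            exact_mod_cast Finset.card_union_le _ _
    have hcard2 : ((G₀ \ A).card : ℝ) ≤ ((F' \ tF).card : ℝ) + ((F' \ G₀).card : ℝ) := by
      calc ((G₀ \ A).card : ℝ) ≤ (((F' \ tF) ∪ (tF \ A)).card : ℝ) := by
            exact_mod_cast Finset.card_le_card hsub2
        _ ≤ ((F' \ tF).card : ℝ) + ((tF \ A).card : ℝ) := by
            exact_mod_cast Finset.card_union_le _ _
        _ = ((F' \ tF).card : ℝ) + ((F' \ G₀).card : ℝ) := by rw [htA]
    have hsd : ((A ∆ G₀).card : ℝ) ≤ ((A \ G₀).card : ℝ) + ((G₀ \ A).card : ℝ) := by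
      rw [symmDiff_def, Finset.sup_eq_union]
      exact_mod_cast Finset.card_union_le _ _
    have htotal : ((A ∆ G₀).card : ℝ) ≤ 2 * ((K:ℝ)^2 + 1) * δ * F'.card := by
      calc ((A ∆ G₀).card : ℝ) ≤ ((A \ G₀).card : ℝ) + ((G₀ \ A).card : ℝ) := hsd
        _ ≤ (((tF \ F').card : ℝ) + ((F' \ G₀).card : ℝ)) +
            (((F' \ tF).card : ℝ) + ((F' \ G₀).card : ℝ)) := by linarith
        _ ≤ (δ * F'.card + (K:ℝ)^2 * δ * F'.card) +
            (δ * F'.card + (K:ℝ)^2 * δ * F'.card) := by linarith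
        _ = 2 * ((K:ℝ)^2 + 1) * δ * F'.card := by ring
    have h8 : 2 * ((K:ℝ)^2 + 1) * δ * F'.card ≤ (ε / 4) * F'.card := by nlinarith
    have h9 : (ε / 4) * (F'.card : ℝ) ≤ (ε / 2) * G₀.card := by nlinarith
    have h10 : (ε / 2) * (G₀.card : ℝ) < ε * G₀.card := by nlinarith
    calc ((A ∆ G₀).card : ℝ) ≤ 2 * ((K:ℝ)^2 + 1) * δ * F'.card := htotal
      _ ≤ (ε / 4) * F'.card := h8
      _ ≤ (ε / 2) * G₀.card := h9
      _ < ε * G₀.card := h10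
  · -- (3) size
    rw [div_lt_iff₀ hG₀pos]
    have : 6 * (K:ℝ)^2 < ε * F'.card := by
      rw [div_lt_iff₀ hε] at hF'big
      nlinarith
    nlinarith
  · -- (4a) disjointness over G₀
    exact fun g hg h hh hne => hEdisj g (hG₀sub hg) h (hG₀sub hh) hne
  · -- (4b) measure bound
    rw [hsum G₀ hG₀sub]
    have e1 : (1 - (K:ℝ)^2 * δ) * ((F'.card : ℝ) * t) ≤ (G₀.card : ℝ) * t := by
      have := mul_le_mul_of_nonneg_right hG₀big ht0
      nlinarith
    have e2 : (1 - (K:ℝ)^2 * δ) * (1 - δ) ≤ (1 - (K:ℝ)^2 * δ) * ((F'.card : ℝ) * t) :=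
      mul_le_mul_of_nonneg_left hFt (by nlinarith)
    have e3 : (0:ℝ) ≤ (K:ℝ)^2 * δ * δ := by positivity
    nlinarith
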